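/- Let G be a group admitting a 2-starter F (a twofold 2-starter additionally satisfying F + y = F for some involution y ∈ G). Then the orbit Orb_G(F) of F under translation has exactly |G|/2 distinct elements, and these form a 2-factorization of the complete graph K_{|G|+1} on vertex set G ∪ {∞}. -/

import Mathlib

/-- Translation of a vertex of `G ∪ {∞}` (encoded as `Option G`, `none = ∞`). -/
def trVert {G : Type*} [AddGroup G] (g : G) : Option G → Option G :=
  Option.map (· + g)

/-- The translate `H + g` of a graph `H` on `G ∪ {∞}`. -/
def translateGraph {G : Type*} [AddGroup G] (g : G)
    (H : SimpleGraph (Option G)) : SimpleGraph (Option G) where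
  Adj u v := H.Adj (trVert (-g) u) (trVert (-g) v)
  symm := ⟨fun _ _ h => h.symm⟩
  loopless := ⟨fun _ h => H.loopless.irrefl _ h⟩

namespace Stmt14Aux
variable {G : Type*} [AddGroup G]

@[simp] lemma trVert_none (g : G) : trVert g (none : Option G) = none := rfl
@[simp] lemma trVert_some (g a : G) : trVert g (some a) = some (a + g) := rfl

lemma trans_adj (g : G) (F : SimpleGraph (Option G)) (u v : Option G) :
    (translateGraph g F).Adj u v ↔ F.Adj (trVert (-g) u) (trVert (-g) v) := Iff.rfl

lemma trVert_comp (a b : G) (u : Option G) :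
    trVert (-b) (trVert (-a) u) = trVert (-(b + a)) u := by
  cases u <;> simp [trVert, neg_add_rev, add_assoc]

lemma trans_comp (a b : G) (F : SimpleGraph (Option G)) :
    translateGraph a (translateGraph b F) = translateGraph (b + a) F := by
  refine SimpleGraph.ext ?_
  funext u v
  show F.Adj (trVert (-b) (trVert (-a) u)) (trVert (-b) (trVert (-a) v)) =
       F.Adj (trVert (-(b + a)) u) (trVert (-(b + a)) v)
  rw [trVert_comp, trVert_comp]

lemma trans_zero (F : SimpleGraph (Option G)) : translateGraph (0 : G) F = F := by
  refine SimpleGraph.ext ?_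
  funext u v
  show F.Adj (trVert (-0) u) (trVert (-0) v) = F.Adj u v
  have h : ∀ w : Option G, trVert (-(0:G)) w = w := by
    intro w; cases w <;> simp [trVert]
  rw [h, h]

lemma solve (c g a : G) (h : a + -g = c) : g = -c + a := by
  rw [← h]; simp [neg_add_rev, add_assoc]

end Stmt14Aux

/-- let `F` be a 2-starter of the finite group `G`: a 2-regular graph
on `G ∪ {∞}` whose difference list contains every nonzero element of `G` exactly
twice, and with `F + y = F` for some involution `y ∈ G`.  Then the orbit of `F`
under translation has exactly `|G|/2` distinct elements, and these translates form
a 2-factorization of the complete graph on `G ∪ {∞}`: every pair of distinct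
vertices is an edge of exactly one translate. -/
theorem stmt_14 {G : Type*} [AddGroup G] [Fintype G]
    (F : SimpleGraph (Option G))
    (h2 : ∀ u : Option G, (F.neighborSet u).ncard = 2)
    (hstarter : ∀ d : G, d ≠ 0 →
      {p : G × G | F.Adj (some p.1) (some p.2) ∧ p.1 - p.2 = d}.ncard = 2)
    (y : G) (hy : y ≠ 0) (hy2 : y + y = 0)
    (hfix : translateGraph y F = F) :
    (Set.range fun g : G => translateGraph g F).ncard = Fintype.card G / 2 ∧
    (∀ u w : Option G, u ≠ w →
      ∃! H : SimpleGraph (Option G),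
        H ∈ Set.range (fun g : G => translateGraph g F) ∧ H.Adj u w) := by
  classical
  open Stmt14Aux in
  set f : G → SimpleGraph (Option G) := fun g => translateGraph g F with hf
  have hyneg : -y = y := neg_eq_of_add_eq_zero_left hy2
  -- translation by y fixes F, at the level of adjacency
  have hAdjy : ∀ u v : Option G, F.Adj (trVert y u) (trVert y v) ↔ F.Adj u v := by
    intro u v
    have h := iff_of_eq (congrFun (congrFun (congrArg SimpleGraph.Adj hfix) u) v)
    have h2 : F.Adj (trVert (-y) u) (trVert (-y) v) ↔ F.Adj u v := h
    rw [hyneg] at h2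
    exact h2
  have hfy : ∀ g : G, f (y + g) = f g := by
    intro g
    have h := Stmt14Aux.trans_comp g y F
    rw [hfix] at h
    simpa [hf] using h.symm
  have hkey : ∀ g g' : G, f g = f g' → translateGraph (g + -g') F = F := by
    intro g g' h
    calc translateGraph (g + -g') F = translateGraph (-g') (f g) :=
          (Stmt14Aux.trans_comp (-g') g F).symm
      _ = translateGraph (-g') (f g') := by rw [h]
      _ = translateGraph (g' + -g') F := Stmt14Aux.trans_comp (-g') g' F
      _ = translateGraph 0 F := by rw [add_neg_cancel]
      _ = F := Stmt14Aux.trans_zero F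
  -- the two neighbours of ∞
  obtain ⟨x1, x2, hx12, hxs⟩ := Set.ncard_eq_two.mp (h2 none)
  have hx1m : x1 ∈ F.neighborSet none := by rw [hxs]; exact Set.mem_insert _ _
  have hx2m : x2 ∈ F.neighborSet none := by
    rw [hxs]; exact Set.mem_insert_of_mem _ rfl
  obtain ⟨n1, rfl⟩ : ∃ n, x1 = some n := by
    cases x1 with
    | none => exact absurd hx1m (F.irrefl)
    | some n => exact ⟨n, rfl⟩
  obtain ⟨n2, rfl⟩ : ∃ n, x2 = some n := by
    cases x2 with
    | none => exact absurd hx2m (F.irrefl)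
    | some n => exact ⟨n, rfl⟩
  have hn1 : F.Adj none (some n1) := hx1m
  have hn2 : F.Adj none (some n2) := hx2m
  have hmemiff : ∀ x : G, F.Adj none (some x) ↔ x = n1 ∨ x = n2 := by
    intro x
    constructor
    · intro h
      have : (some x : Option G) ∈ F.neighborSet none := h
      rw [hxs] at this
      rcases this with h | h
      · exact Or.inl (Option.some_injective _ h)
      · exact Or.inr (Option.some_injective _ h)
    · rintro (rfl | rfl)
      · exact hn1
      · exact hn2
  have hn2y : n1 + y = n2 := by
    have h := (hAdjy none (some n1)).mpr hn1
    simp only [Stmt14Aux.trVert_none, Stmt14Aux.trVert_some] at h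
    rcases (hmemiff _).mp h with h' | h'
    · exact absurd (by simpa using congrArg (fun t => -n1 + t) h') hy
    · exact h'
  -- the stabiliser of F is {0, y}
  have hstab : ∀ z : G, translateGraph z F = F → z = 0 ∨ z = y := by
    intro z hz
    have h := iff_of_eq (congrFun (congrFun (congrArg SimpleGraph.Adj hz)
      (none : Option G)) (some n1))
    have h1 : F.Adj none (some (n1 + -z)) := by
      have := h.mpr hn1
      simpa [Stmt14Aux.trans_adj] using this
    rcases (hmemiff _).mp h1 with h' | h'
    · left
      have : -z = 0 := by simpa using congrArg (fun t => -n1 + t) h'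
      simpa using congrArg Neg.neg this
    · right
      rw [← hn2y] at h'
      have hz' : -z = y := by simpa using congrArg (fun t => -n1 + t) h'
      rw [← hyneg, ← hz', neg_neg]
  have hfeq : ∀ g g' : G, f g = f g' ↔ (g = g' ∨ g = y + g') := by
    intro g g'
    constructor
    · intro h
      rcases hstab _ (hkey g g' h) with h0 | h0
      · left
        have : g - g' = 0 := by rwa [sub_eq_add_neg]
        exact sub_eq_zero.mp this
      · right
        have hgg : g - g' = y := by rwa [sub_eq_add_neg]
        calc g = g - g' + g' := by rw [sub_add_cancel]
          _ = y + g' := by rw [hgg]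
    · rintro (rfl | rfl)
      · rfl
      · exact hfy g'
  have hyg : ∀ g : G, y + g ≠ g := by
    intro g h
    exact hy (by simpa using congrArg (fun t => t + -g) h)
  -- counting the orbit
  have hcount : (Set.range f).ncard = Fintype.card G / 2 := by
    have himg : Set.range f = ↑(Finset.univ.image f) := by
      rw [← Set.image_univ, ← Finset.coe_univ, Finset.coe_image]
    rw [himg, Set.ncard_coe_finset]
    have hfib : ∀ b ∈ Finset.univ.image f,
        (Finset.univ.filter fun x => f x = b).card = 2 := by
      intro b hb
      obtain ⟨g, -, rfl⟩ := Finset.mem_image.mp hb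
      have hfil : (Finset.univ.filter fun x => f x = f g) = {g, y + g} := by
        ext x
        simp [hfeq]
      rw [hfil]
      exact Finset.card_pair (fun h => hyg g h.symm)
    have hcard : Fintype.card G = (Finset.univ.image f).card * 2 := by
      have h := Finset.card_eq_sum_card_image f (Finset.univ : Finset G)
      rw [Finset.sum_congr rfl hfib, Finset.sum_const, smul_eq_mul] at h
      exact h
    omega
  refine ⟨hcount, ?_⟩
  -- uniqueness for pairs involving ∞
  have huniq_inf : ∀ a : G, ∃! H, H ∈ Set.range f ∧ H.Adj none (some a) := by
    intro a
    refine ⟨f (-n1 + a), ⟨Set.mem_range_self _, ?_⟩, ?_⟩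
    · show F.Adj (trVert (-(-n1 + a)) none) (trVert (-(-n1 + a)) (some a))
      have h : a + -(-n1 + a) = n1 := by
        simp [neg_add_rev, ← add_assoc]
      simp only [Stmt14Aux.trVert_none, Stmt14Aux.trVert_some, h]
      exact hn1
    · rintro H ⟨⟨g, rfl⟩, hadj⟩
      have hadj' : F.Adj none (some (a + -g)) := by
        simpa [hf, Stmt14Aux.trans_adj] using hadj
      rcases (hmemiff _).mp hadj' with h' | h'
      · have : g = -n1 + a := Stmt14Aux.solve _ _ _ h'
        rw [this]
      · rw [← hn2y] at h'
        have hg : g = -(n1 + y) + a := Stmt14Aux.solve _ _ _ h'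
        have hg' : g = y + (-n1 + a) := by
          rw [hg, neg_add_rev, hyneg, add_assoc]
        exact (hfeq g (-n1 + a)).mpr (Or.inr hg')
  have hsymm : ∀ u w : Option G,
      (∃! H, H ∈ Set.range f ∧ H.Adj u w) → (∃! H, H ∈ Set.range f ∧ H.Adj w u) := by
    rintro u w ⟨H, ⟨hm, ha⟩, hu⟩
    exact ⟨H, ⟨hm, ha.symm⟩, fun H' ⟨hm', ha'⟩ => hu H' ⟨hm', ha'.symm⟩⟩
  intro u w huw
  match u, w with
  | none, none => exact absurd rfl huw
  | none, some a => exact huniq_inf a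
  | some a, none => exact hsymm none (some a) (huniq_inf a)
  | some a, some b =>
    have hab : a ≠ b := fun h => huw (by rw [h])
    have hd : a - b ≠ 0 := sub_ne_zero.mpr hab
    obtain ⟨p, q, hpq, hS⟩ := Set.ncard_eq_two.mp (hstarter (a - b) hd)
    have hpmem : p ∈ {p : G × G | F.Adj (some p.1) (some p.2) ∧ p.1 - p.2 = a - b} := by
      rw [hS]; exact Set.mem_insert _ _
    obtain ⟨hpadj, hpdiff⟩ := hpmem
    -- the second pair is p shifted by y
    have hp'mem : (p.1 + y, p.2 + y) ∈
        {p : G × G | F.Adj (some p.1) (some p.2) ∧ p.1 - p.2 = a - b} := by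
      constructor
      · exact (hAdjy (some p.1) (some p.2)).mpr hpadj
      · show (p.1 + y) - (p.2 + y) = a - b
        rw [sub_eq_add_neg, neg_add_rev, hyneg, ← add_assoc, add_assoc p.1 y y,
          hy2, add_zero, ← sub_eq_add_neg, hpdiff]
    have hp'ne : (p.1 + y, p.2 + y) ≠ p := by
      intro h
      have := congrArg Prod.fst h
      exact hy (by simpa using congrArg (fun t => -p.1 + t) this)
    have hq : q = (p.1 + y, p.2 + y) := by
      rw [hS] at hp'mem
      rcases hp'mem with h | h
      · exact absurd h hp'ne
      · exact h.symm
    have hmem2 : ∀ r : G × G, F.Adj (some r.1) (some r.2) → r.1 - r.2 = a - b →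
        r = p ∨ r = (p.1 + y, p.2 + y) := by
      intro r h1 h2
      have : r ∈ {p : G × G | F.Adj (some p.1) (some p.2) ∧ p.1 - p.2 = a - b} :=
        ⟨h1, h2⟩
      rw [hS, hq] at this
      exact this
    -- the candidate translate
    set g0 : G := -p.1 + a with hg0
    have ha0 : a + -g0 = p.1 := by
      rw [hg0]; simp [neg_add_rev, ← add_assoc]
    have hb0 : b + -g0 = p.2 := by
      have h1 : p.1 = (a - b) + p.2 := sub_eq_iff_eq_add.mp hpdiff
      rw [hg0, neg_add_rev, neg_neg, ← add_assoc, h1, sub_eq_add_neg]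
      rw [show b + -a + (a + -b + p.2) = b + (-a + a) + -b + p.2 by
        simp [add_assoc]]
      simp
    refine ⟨f g0, ⟨Set.mem_range_self _, ?_⟩, ?_⟩
    · show F.Adj (trVert (-g0) (some a)) (trVert (-g0) (some b))
      simp only [Stmt14Aux.trVert_some, ha0, hb0]
      exact hpadj
    · rintro H ⟨⟨g, rfl⟩, hadj⟩
      have hadj' : F.Adj (some (a + -g)) (some (b + -g)) := hadj
      have hdiff : (a + -g) - (b + -g) = a - b := by
        rw [sub_eq_add_neg, neg_add_rev, neg_neg, add_assoc, ← add_assoc (-g) g (-b),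
          neg_add_cancel, zero_add, ← sub_eq_add_neg]
      rcases hmem2 (a + -g, b + -g) hadj' hdiff with h' | h'
      · have h1 : a + -g = p.1 := congrArg Prod.fst h'
        have : g = g0 := by rw [hg0]; exact Stmt14Aux.solve _ _ _ h1
        rw [this]
      · have h1 : a + -g = p.1 + y := congrArg Prod.fst h'
        have hg : g = -(p.1 + y) + a := Stmt14Aux.solve _ _ _ h1
        have hg' : g = y + g0 := by
          rw [hg, neg_add_rev, hyneg, add_assoc, hg0]
        exact (hfeq g g0).mpr (Or.inr hg')
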